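/- Every element of G₃₅₁ is a symmetry of the tournament Γ, and the Frobenius permutation F : x ↦ x³ of F₂₇ is a symmetry of Γ. Moreover, G₃₅₁ acts transitively on the directed edges of Γ: for any a, b ∈ F₂₇ such that b − a is a nonzero square, there exists g ∈ G₃₅₁ with g(0) = a and g(1) = b. -/

import Mathlib

/-- `F₂₇`, a finite field with 27 elements. -/
abbrev F27 : Type := GaloisField 3 3

/-- `a` is a nonzero square in `F₂₇`. -/
def IsNonzeroSquare (a : F27) : Prop := a ≠ 0 ∧ ∃ c : F27, a = c ^ 2

/-- The set of affine permutations `x ↦ a·x + b` with `a` a nonzero square. -/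
def affineSet : Set (Equiv.Perm F27) :=
  { g | ∃ a b : F27, IsNonzeroSquare a ∧ ∀ x : F27, g x = a * x + b }

/-- `g` is a symmetry of the tournament `Γ` on `F₂₇` whose directed edges `(a, b)`
are the pairs with `b - a` a nonzero square. -/
def IsTournamentSym (g : Equiv.Perm F27) : Prop :=
  ∀ a b : F27, IsNonzeroSquare (b - a) ↔ IsNonzeroSquare (g b - g a)

lemma mul_nzsq {a : F27} (ha : IsNonzeroSquare a) (d : F27) :
    IsNonzeroSquare d ↔ IsNonzeroSquare (a * d) := by
  obtain ⟨ha0, c, rfl⟩ := ha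
  have hc : c ≠ 0 := by rintro rfl; simp at ha0
  constructor
  · rintro ⟨hd0, e, rfl⟩
    exact ⟨mul_ne_zero ha0 hd0, c * e, by ring⟩
  · rintro ⟨h0, e, he⟩
    refine ⟨fun hd => h0 (by simp [hd]), c⁻¹ * e, ?_⟩
    have : d = (c ^ 2)⁻¹ * (c ^ 2 * d) := by field_simp
    rw [this, he, mul_pow, inv_pow]

lemma cube_inj : Function.Injective (fun x : F27 => x ^ 3) := by
  haveI : Fact (Nat.Prime 3) := ⟨by norm_num⟩
  intro x y h
  exact frobenius_inj F27 3 (by simpa [frobenius_def] using h)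

lemma cube_surj : Function.Surjective (fun x : F27 => x ^ 3) :=
  Finite.surjective_of_injective cube_inj

theorem statement4 (G : Subgroup (Equiv.Perm F27))
    (hG : (G : Set (Equiv.Perm F27)) = affineSet) :
    (∀ g ∈ G, IsTournamentSym g) ∧
    (∃ F : Equiv.Perm F27, (∀ x : F27, F x = x ^ 3) ∧ IsTournamentSym F) ∧
    (∀ a b : F27, IsNonzeroSquare (b - a) → ∃ g ∈ G, g 0 = a ∧ g 1 = b) := by
  haveI : Fact (Nat.Prime 3) := ⟨by norm_num⟩
  refine ⟨?_, ?_, ?_⟩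
  · intro g hg
    rw [← SetLike.mem_coe, hG] at hg
    obtain ⟨A, B, hA, hgx⟩ := hg
    intro a b
    have : g b - g a = A * (b - a) := by rw [hgx, hgx]; ring
    rw [this]
    exact mul_nzsq hA _
  · refine ⟨Equiv.ofBijective (fun x : F27 => x ^ 3) ⟨cube_inj, cube_surj⟩,
      fun x => rfl, ?_⟩
    intro a b
    have hsub : (fun x : F27 => x ^ 3) b - (fun x : F27 => x ^ 3) a = (b - a) ^ 3 := by
      simp only
      exact (sub_pow_char (x := b) (y := a) (p := 3)).symm
    show IsNonzeroSquare (b - a) ↔ IsNonzeroSquare (b ^ 3 - a ^ 3)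
    rw [show b ^ 3 - a ^ 3 = (b - a) ^ 3 from hsub]
    constructor
    · rintro ⟨h0, c, hc⟩
      exact ⟨pow_ne_zero 3 h0, c ^ 3, by rw [hc]; ring⟩
    · rintro ⟨h0, e, he⟩
      obtain ⟨f, hf⟩ := cube_surj e
      simp only at hf
      refine ⟨fun h => h0 (by simp [h]), f, cube_inj ?_⟩
      show (b - a) ^ 3 = (f ^ 2) ^ 3
      rw [he, show (f ^ 2) ^ 3 = (f ^ 3) ^ 2 by ring, hf]
  · intro a b hab
    refine ⟨(Equiv.mulLeft₀ (b - a) hab.1).trans (Equiv.addRight a), ?_, ?_, ?_⟩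
    · rw [← SetLike.mem_coe, hG]
      exact ⟨b - a, a, hab, fun x => rfl⟩
    · simp
    · simp
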